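/- arXiv:0811.1689 — 5 statements merged into one kernel-verified Lean document; each statement's English description precedes it below -/
import Mathlib

section
/- If X is a componentwise solution of the dyadic model with initial condition X^0 having all nonnegative components, then X_n(t) ≥ 0 for all n ≥ 1 and all t ≥ 0. -/
/-- A componentwise solution of the unforced dyadic model: `X 0 ≡ 0` and
`dX_n/dt = k_{n-1} X_{n-1}^2 - k_n X_n X_{n+1}` with `k_n = 2^n`, for `n ≥ 1`,
on the time interval `[0, ∞)`. -/
def IsDyadicSol (X : ℕ → ℝ → ℝ) : Prop :=
  (∀ t : ℝ, 0 ≤ t → X 0 t = 0) ∧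
  ∀ n : ℕ, ∀ t : ℝ, 0 ≤ t →
    HasDerivAt (X (n + 1))
      ((2 : ℝ) ^ n * (X n t) ^ 2 - 2 ^ (n + 1) * X (n + 1) t * X (n + 2) t) t

/-- If the initial condition has all nonnegative components, then any componentwise
solution stays nonnegative. -/
theorem dyadic_positivity (X : ℕ → ℝ → ℝ) (hX : IsDyadicSol X)
    (h0 : ∀ n : ℕ, 0 ≤ X n 0) :
    ∀ n : ℕ, 1 ≤ n → ∀ t : ℝ, 0 ≤ t → 0 ≤ X n t := by
  obtain ⟨h0X, hD⟩ := hX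
  intro n hn t ht
  obtain ⟨m, rfl⟩ : ∃ m, n = m + 1 := ⟨n - 1, (Nat.succ_pred_eq_of_pos hn).symm⟩
  -- the "coefficient" function, extended continuously to all of ℝ
  set a : ℝ → ℝ := fun s => 2 ^ (m + 1) * X (m + 2) (max s 0) with ha
  have hcontX : ∀ k : ℕ, ∀ s : ℝ, 0 ≤ s → ContinuousAt (X (k + 1)) s := fun k s hs =>
    (hD k s hs).continuousAt
  have hconta : Continuous a := by
    apply continuous_const.mul
    refine continuous_iff_continuousAt.2 fun s => ?_
    have hmax : ContinuousAt (fun s : ℝ => max s 0) s :=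
      (continuous_id.max continuous_const).continuousAt
    exact ContinuousAt.comp (g := X (m + 2)) (f := fun s : ℝ => max s 0)
      (hcontX (m + 1) (max s 0) (le_max_right _ _)) hmax
  set F : ℝ → ℝ := fun t => ∫ s in (0:ℝ)..t, a s with hFdef
  have hF : ∀ t : ℝ, HasDerivAt F (a t) t := fun t =>
    intervalIntegral.integral_hasDerivAt_right (hconta.intervalIntegrable _ _)
      hconta.aestronglyMeasurable.stronglyMeasurableAtFilter hconta.continuousAt
  set g : ℝ → ℝ := fun t => X (m + 1) t * Real.exp (F t) with hgdef
  have hg : ∀ s : ℝ, 0 ≤ s →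
      HasDerivAt g (Real.exp (F s) * (2 ^ m * (X m s) ^ 2)) s := by
    intro s hs
    have h1 := (hD m s hs).mul ((hF s).exp)
    refine h1.congr_deriv ?_
    have : max s 0 = s := max_eq_left hs
    simp only [ha, this]
    ring
  have hmono : MonotoneOn g (Set.Ici (0:ℝ)) := by
    apply monotoneOn_of_deriv_nonneg (convex_Ici 0)
    · exact fun s hs => ((hg s hs).continuousAt).continuousWithinAt
    · rw [interior_Ici]
      exact fun s hs => ((hg s (le_of_lt hs)).differentiableAt).differentiableWithinAt
    · rw [interior_Ici]
      intro s hs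
      rw [(hg s (le_of_lt hs)).deriv]
      positivity
  have h01 : g 0 ≤ g t := hmono Set.self_mem_Ici ht ht
  have hg0 : 0 ≤ g 0 := by
    have : F 0 = 0 := intervalIntegral.integral_same
    simp [hgdef, this, Real.exp_zero]
    exact h0 (m + 1)
  have hexp := Real.exp_pos (F t)
  have hgt : g t = X (m + 1) t * Real.exp (F t) := rfl
  nlinarith [h01, hg0]
end

section
/- Let X be a positive componentwise solution of the dyadic model. If X_n^0 > 0 for some n ≥ 1, then X_m(t) > 0 for every m ≥ n and every t > 0. -/
lemma dyadic_aux (X : ℕ → ℝ → ℝ) (hX : IsDyadicSol X)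
    (hpos : ∀ n : ℕ, ∀ t : ℝ, 0 ≤ t → 0 ≤ X n t)
    (k : ℕ) (t : ℝ) (ht : 0 < t)
    (H : 0 < X (k+1) 0 ∨ ∀ s : ℝ, 0 < s → s < t → 0 < X k s) :
    0 < X (k+1) t := by
  have hcont2 : ∀ s : ℝ, 0 ≤ s → ContinuousAt (X (k+2)) s := fun s hs =>
    (hX.2 (k+1) s hs).continuousAt
  set g : ℝ → ℝ := fun s => (2:ℝ)^(k+1) * X (k+2) (max s 0) with hg
  have hgcont : Continuous g := by
    apply continuous_const.mul
    rw [continuous_iff_continuousAt]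
    intro s
    exact ContinuousAt.comp (f := fun s : ℝ => max s 0)
      (hcont2 (max s 0) (le_max_right _ _))
      ((continuous_id.max continuous_const).continuousAt)
  set E : ℝ → ℝ := fun s => ∫ u in (0:ℝ)..s, g u with hE
  have hEderiv : ∀ s : ℝ, HasDerivAt E (g s) s := fun s =>
    intervalIntegral.integral_hasDerivAt_right (hgcont.intervalIntegrable _ _)
      (hgcont.stronglyMeasurableAtFilter _ _) hgcont.continuousAt
  set F : ℝ → ℝ := fun s => X (k+1) s * Real.exp (E s) with hF
  have hFderiv : ∀ s : ℝ, 0 ≤ s →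
      HasDerivAt F (Real.exp (E s) * ((2:ℝ)^k * X k s ^ 2)) s := by
    intro s hs
    have h1 := hX.2 k s hs
    have h2 := (hEderiv s).exp
    have h3 : HasDerivAt (fun y => X (k+1) y * Real.exp (E y)) _ s := h1.mul h2
    convert h3 using 1
    have hm : max s 0 = s := max_eq_left hs
    simp only [hg, hm]
    ring
  have hFcont : ContinuousOn F (Set.Icc 0 t) := fun s hs =>
    (hFderiv s hs.1).continuousAt.continuousWithinAt
  have hE0 : E 0 = 0 := by simp [hE]
  have hF0 : F 0 = X (k+1) 0 := by simp [hF, hE0]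
  have hFt : 0 < F t := by
    rcases H with h | h
    · have hmono : MonotoneOn F (Set.Icc 0 t) := by
        apply monotoneOn_of_deriv_nonneg (convex_Icc 0 t) hFcont
        · intro x hx
          rw [interior_Icc] at hx
          exact (hFderiv x hx.1.le).differentiableAt.differentiableWithinAt
        · intro x hx
          rw [interior_Icc] at hx
          rw [(hFderiv x hx.1.le).deriv]
          positivity
      have h0t : F 0 ≤ F t :=
        hmono (Set.left_mem_Icc.2 ht.le) (Set.right_mem_Icc.2 ht.le) ht.le
      linarith [hF0 ▸ h0t]
    · have hmono : StrictMonoOn F (Set.Icc 0 t) := by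
        apply strictMonoOn_of_deriv_pos (convex_Icc 0 t) hFcont
        intro x hx
        rw [interior_Icc] at hx
        rw [(hFderiv x hx.1.le).deriv]
        have hx0 := h x hx.1 hx.2
        positivity
      have h0t : F 0 < F t :=
        hmono (Set.left_mem_Icc.2 ht.le) (Set.right_mem_Icc.2 ht.le) ht
      have := hpos (k+1) 0 le_rfl
      linarith [hF0 ▸ h0t]
  have he := Real.exp_pos (E t)
  have hFt' : 0 < X (k+1) t * Real.exp (E t) := hFt
  by_contra hc
  push_neg at hc
  nlinarith [hFt', he]

/-- If some initial component is strictly positive, then all later components are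
strictly positive for all positive times. -/
theorem dyadic_strict_positivity (X : ℕ → ℝ → ℝ) (hX : IsDyadicSol X)
    (hpos : ∀ n : ℕ, ∀ t : ℝ, 0 ≤ t → 0 ≤ X n t)
    (n : ℕ) (hn : 1 ≤ n) (h0 : 0 < X n 0) :
    ∀ m : ℕ, n ≤ m → ∀ t : ℝ, 0 < t → 0 < X m t := by
  obtain ⟨k, rfl⟩ : ∃ k, n = k + 1 := ⟨n - 1, (Nat.succ_pred_eq_of_pos hn).symm⟩
  intro m hm
  induction m, hm using Nat.le_induction with
  | base => exact fun t ht => dyadic_aux X hX hpos k t ht (Or.inl h0)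
  | succ m hm ih =>
    exact fun t ht => dyadic_aux X hX hpos m t ht (Or.inr fun s hs _ => ih s hs)
end

section
/- Suppose that for all positive finite-energy solutions X of the dyadic model with |X(0)|_{l²} = 1 there exists a fixed time t̄ > 0 such that |X(t̄)|²_{l²} ≤ 1/4, and that the energy |X(t)|²_{l²} is nonincreasing in t. Then every positive finite-energy solution with |X(0)|_{l²}² = 1 satisfies |X(t)|²_{l²} ≤ 4 t̄² / t² for all t ≥ 2 t̄. -/
/-- The energy `|X(t)|²_{l²}` of a solution at time `t`. -/
noncomputable def energy (X : ℕ → ℝ → ℝ) (t : ℝ) : ℝ := ∑' n : ℕ, (X n t) ^ 2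

/-- A positive finite-energy solution. -/
def IsPosFE (X : ℕ → ℝ → ℝ) : Prop :=
  IsDyadicSol X ∧ (∀ n : ℕ, ∀ t : ℝ, 0 ≤ t → 0 ≤ X n t) ∧
    ∀ t : ℝ, 0 ≤ t → Summable fun n : ℕ => (X n t) ^ 2

lemma energy_nonneg (X : ℕ → ℝ → ℝ) (t : ℝ) : 0 ≤ energy X t :=
  tsum_nonneg fun n => sq_nonneg _

/-- One rescaling step: if the energy at time `s` is `a²`, then after additional time
`tb / a` the energy has dropped to at most `a² / 4`. -/
lemma dyadic_step (tb : ℝ) (htb : 0 < tb)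
    (Hhalf : ∀ X : ℕ → ℝ → ℝ, IsPosFE X → energy X 0 = 1 → energy X tb ≤ 1 / 4)
    (X : ℕ → ℝ → ℝ) (hX : IsPosFE X) (s a : ℝ) (hs : 0 ≤ s) (ha : 0 < a)
    (hE : energy X s = a ^ 2) :
    energy X (s + tb / a) ≤ a ^ 2 / 4 := by
  set Z : ℕ → ℝ → ℝ := fun n u => a⁻¹ * X n (u / a + s) with hZ
  have hmem : ∀ u : ℝ, 0 ≤ u → 0 ≤ u / a + s := fun u hu =>
    add_nonneg (div_nonneg hu ha.le) hs
  have hEZ : ∀ u : ℝ, energy Z u = (a ^ 2)⁻¹ * energy X (u / a + s) := by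
    intro u
    simp only [energy, hZ]
    rw [← tsum_mul_left]
    congr 1; ext n
    rw [mul_pow]; ring_nf
  have hZFE : IsPosFE Z := by
    refine ⟨⟨?_, ?_⟩, ?_, ?_⟩
    · intro t ht; simp [hZ, hX.1.1 _ (hmem t ht)]
    · intro n t ht
      have h1 := hX.1.2 n _ (hmem t ht)
      have hin : HasDerivAt (fun u : ℝ => u / a + s) a⁻¹ t := by
        simpa [one_div] using ((hasDerivAt_id t).div_const a).add_const s
      have h2 := (h1.comp t hin).const_mul a⁻¹
      convert h2 using 1
      · rfl
      · rfl
      · rfl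
      simp only [hZ]
      field_simp
    · intro n t ht
      exact mul_nonneg (inv_nonneg.mpr ha.le) (hX.2.1 n _ (hmem t ht))
    · intro t ht
      have h := (hX.2.2 _ (hmem t ht)).mul_left ((a⁻¹) ^ 2)
      exact h.congr fun n => by rw [mul_pow]
  have h0 : energy Z 0 = 1 := by
    rw [hEZ]
    simp only [zero_div, zero_add, hE]
    field_simp
  have hh := Hhalf Z hZFE h0
  rw [hEZ] at hh
  have ha2 : (0 : ℝ) < a ^ 2 := by positivity
  have := mul_le_mul_of_nonneg_left hh ha2.le
  rw [← mul_assoc, mul_inv_cancel₀ ha2.ne', one_mul] at this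
  calc energy X (s + tb / a) = energy X (tb / a + s) := by rw [add_comm]
    _ ≤ a ^ 2 * (1 / 4) := this
    _ = a ^ 2 / 4 := by ring

/-- Iteration times for the decay argument. -/
noncomputable def tseq (X : ℕ → ℝ → ℝ) (tb : ℝ) : ℕ → ℝ
  | 0 => 0
  | k + 1 => tseq X tb k + max tb (tb / Real.sqrt (energy X (tseq X tb k)))

/-- Decay of energy like `t⁻²`: if every positive finite-energy solution of unit
initial energy halves its energy (squared norm `≤ 1/4`) by a fixed time `t̄`, and
energy is nonincreasing, then every such solution satisfies
`|X(t)|² ≤ 4 t̄² / t²` for `t ≥ 2 t̄`. -/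
theorem dyadic_energy_decay (tb : ℝ) (htb : 0 < tb)
    (Hhalf : ∀ X : ℕ → ℝ → ℝ, IsPosFE X → energy X 0 = 1 → energy X tb ≤ 1 / 4)
    (Hmono : ∀ X : ℕ → ℝ → ℝ, IsPosFE X →
      ∀ s t : ℝ, 0 ≤ s → s ≤ t → energy X t ≤ energy X s)
    (X : ℕ → ℝ → ℝ) (hX : IsPosFE X) (hX1 : energy X 0 = 1) :
    ∀ t : ℝ, 2 * tb ≤ t → energy X t ≤ 4 * tb ^ 2 / t ^ 2 := by
  set T : ℕ → ℝ := tseq X tb with hT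
  -- basic facts about the sequence
  have hstep : ∀ k, T k + tb ≤ T (k + 1) := by
    intro k
    have : tb ≤ max tb (tb / Real.sqrt (energy X (T k))) := le_max_left _ _
    simpa [hT, tseq] using add_le_add_left this (T k)
  have hinv : ∀ k, 0 ≤ T k ∧ Real.sqrt (energy X (T k)) * T k ≤ tb := by
    intro k
    induction k with
    | zero =>
      have h0 : T 0 = 0 := rfl
      rw [h0]
      simp [htb.le]
    | succ k ih =>
      obtain ⟨hk0, hkb⟩ := ih
      set a : ℝ := Real.sqrt (energy X (T k)) with haeq
      have hEk : energy X (T k) = a ^ 2 :=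
        (Real.sq_sqrt (energy_nonneg X (T k))).symm
      have hk1 : energy X (T k) ≤ 1 := hX1 ▸ Hmono X hX 0 (T k) le_rfl hk0
      rcases eq_or_lt_of_le (energy_nonneg X (T k)) with hzero | hpos
      · -- energy already zero: it stays zero
        have ha0 : a = 0 := by rw [haeq, ← hzero, Real.sqrt_zero]
        have hT1 : T (k + 1) = T k + tb := by
          simp only [hT, tseq]; rw [← hT, ← haeq, ha0]; simp [htb.le]
        have h1 : 0 ≤ T (k + 1) := by
          rw [hT1]; positivity
        have hE1 : energy X (T (k + 1)) = 0 := by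
          refine le_antisymm ?_ (energy_nonneg X _)
          have hm := Hmono X hX (T k) (T (k + 1)) hk0 (by rw [hT1]; linarith)
          linarith
        refine ⟨h1, ?_⟩
        rw [hE1, Real.sqrt_zero, zero_mul]
        exact htb.le
      · -- positive energy: rescale
        have ha : 0 < a := Real.sqrt_pos.mpr hpos
        have ha1 : a ≤ 1 := by
          rw [haeq, show (1 : ℝ) = Real.sqrt 1 by simp]
          exact Real.sqrt_le_sqrt hk1
        have hmax : max tb (tb / a) = tb / a := by
          refine max_eq_right ?_
          rw [le_div_iff₀ ha]
          nlinarith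
        have hT1 : T (k + 1) = T k + tb / a := by
          simp only [hT, tseq]; rw [← hT, ← haeq, hmax]
        have h1 : 0 ≤ T (k + 1) := by
          rw [hT1]; positivity
        have hdrop : energy X (T (k + 1)) ≤ a ^ 2 / 4 := by
          rw [hT1]
          exact dyadic_step tb htb Hhalf X hX (T k) a hk0 ha hEk
        have hsqrt : Real.sqrt (energy X (T (k + 1))) ≤ a / 2 := by
          have h2 : energy X (T (k + 1)) ≤ (a / 2) ^ 2 := by
            nlinarith [hdrop]
          calc Real.sqrt (energy X (T (k + 1))) ≤ Real.sqrt ((a / 2) ^ 2) :=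
                Real.sqrt_le_sqrt h2
            _ = a / 2 := Real.sqrt_sq (by positivity)
        refine ⟨h1, ?_⟩
        calc Real.sqrt (energy X (T (k + 1))) * T (k + 1) ≤ (a / 2) * T (k + 1) :=
              mul_le_mul_of_nonneg_right hsqrt h1
          _ = (a / 2) * (T k + tb / a) := by rw [hT1]
          _ = (a * T k) / 2 + tb / 2 := by field_simp
          _ ≤ tb / 2 + tb / 2 := by linarith
          _ = tb := by ring
  have hgrow : ∀ k : ℕ, (k : ℝ) * tb ≤ T k := by
    intro k
    induction k with
    | zero => simp [hT, tseq]
    | succ k ih =>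
      have := hstep k
      push_cast
      linarith
  -- main conclusion
  intro t ht
  have ht0 : 0 < t := lt_of_lt_of_le (by linarith) ht
  -- find j with T j ≤ t < T (j+1)
  have hfind : ∀ k, t < T k → ∃ j, T j ≤ t ∧ t < T (j + 1) := by
    intro k
    induction k with
    | zero => intro h; exact absurd h (by simp [hT, tseq]; linarith)
    | succ k ih =>
      intro h
      by_cases hk : T k ≤ t
      · exact ⟨k, hk, h⟩
      · exact ih (lt_of_not_ge hk)
  obtain ⟨k, hk⟩ := exists_nat_gt (t / tb)
  have htk : t < T k := lt_of_lt_of_le (by rwa [div_lt_iff₀ htb] at hk) (hgrow k)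
  obtain ⟨j, hj1, hj2⟩ := hfind k htk
  obtain ⟨hj0, hjb⟩ := hinv j
  set a : ℝ := Real.sqrt (energy X (T j)) with haeq
  have hEj : energy X (T j) = a ^ 2 := (Real.sq_sqrt (energy_nonneg X (T j))).symm
  have hEt : energy X t ≤ a ^ 2 := hEj ▸ Hmono X hX (T j) t hj0 hj1
  rcases eq_or_lt_of_le (Real.sqrt_nonneg (energy X (T j))) with ha0 | hapos
  · -- a = 0
    have haz : a = 0 := ha0.symm
    rw [haz] at hEt
    have hrhs : 0 ≤ 4 * tb ^ 2 / t ^ 2 := by positivity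
    nlinarith [hEt]
  · -- a > 0 : t < T (j+1) ≤ 2 tb / a
    have ha : 0 < a := hapos
    have hk1 : energy X (T j) ≤ 1 := hX1 ▸ Hmono X hX 0 (T j) le_rfl hj0
    have ha1 : a ≤ 1 := by
      rw [haeq, show (1 : ℝ) = Real.sqrt 1 by simp]
      exact Real.sqrt_le_sqrt hk1
    have hmax : max tb (tb / a) = tb / a := by
      refine max_eq_right ?_
      rw [le_div_iff₀ ha]
      nlinarith
    have hT1 : T (j + 1) = T j + tb / a := by
      simp only [hT, tseq]; rw [← hT, ← haeq, hmax]
    have hTj : T j ≤ tb / a := by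
      rw [le_div_iff₀ ha]
      nlinarith
    have htlt : a * t < 2 * tb := by
      have h3 : t < tb / a + tb / a := by rw [hT1] at hj2; linarith
      calc a * t < a * (tb / a + tb / a) := mul_lt_mul_of_pos_left h3 ha
        _ = 2 * tb := by field_simp; ring
    have hsq : a ^ 2 * t ^ 2 ≤ 4 * tb ^ 2 := by
      nlinarith [mul_nonneg ha.le ht0.le]
    rw [le_div_iff₀ (by positivity : (0 : ℝ) < t ^ 2)]
    nlinarith [sq_nonneg t, hEt, hsq]
end

section
/- Let X be a positive componentwise solution of the dyadic model such that X_n(t) ≤ C/t for all t ≥ 1 and all n (for some constant C > 0), and suppose X_n(1) > 0 for some fixed n. Then ∫_1^t X_{n+1}(s) ds ≥ k_n^{-1} log t + k_n^{-1} log(X_n(1)/C) for all t ≥ 1. Consequently ∫_1^∞ X_{n+1}(s) ds = ∞ and limsup_{t→∞} t · X_{n+1}(t) ≥ k_n^{-1}. -/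
open intervalIntegral Filter

/-- Lower bound for the time integral of a component: if the solution decays like
`C/t` and `X_n(1) > 0`, then `∫_1^t X_{n+1} ≥ k_n⁻¹ log t + k_n⁻¹ log (X_n(1)/C)`;
hence `∫_1^∞ X_{n+1} = ∞` and `limsup t X_{n+1}(t) ≥ k_n⁻¹`. -/
theorem dyadic_integral_lower_bound (X : ℕ → ℝ → ℝ) (hX : IsDyadicSol X)
    (hpos : ∀ n : ℕ, ∀ t : ℝ, 0 ≤ t → 0 ≤ X n t)
    (C : ℝ) (hC : 0 < C)
    (hdecay : ∀ n : ℕ, ∀ t : ℝ, 1 ≤ t → X n t ≤ C / t)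
    (n : ℕ) (hn : 1 ≤ n) (hn1 : 0 < X n 1) :
    (∀ t : ℝ, 1 ≤ t →
      ((2 : ℝ) ^ n)⁻¹ * Real.log t + ((2 : ℝ) ^ n)⁻¹ * Real.log (X n 1 / C)
        ≤ ∫ s in (1:ℝ)..t, X (n + 1) s)
    ∧ Tendsto (fun t : ℝ => ∫ s in (1:ℝ)..t, X (n + 1) s) atTop atTop
    ∧ ((2 : ℝ) ^ n)⁻¹ ≤ Filter.limsup (fun t : ℝ => t * X (n + 1) t) atTop := by
  obtain ⟨h0, hode⟩ := hX
  obtain ⟨m, rfl⟩ := Nat.exists_eq_add_of_le' hn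
  set k : ℝ := (2 : ℝ) ^ (m + 1) with hkdef
  have hkpos : 0 < k := by positivity
  have hk0 : k ≠ 0 := ne_of_gt hkpos
  -- continuity of X (m+2) on (0, ∞)
  have hfc : ∀ t : ℝ, 0 ≤ t → ContinuousAt (X (m + 2)) t := fun t ht =>
    (hode (m + 1) t ht).continuousAt
  have hfcOn : ContinuousOn (X (m + 2)) (Set.Ioi (0 : ℝ)) :=
    fun s hs => (hfc s (le_of_lt hs)).continuousWithinAt
  have hint : ∀ a b : ℝ, 1 ≤ a → 1 ≤ b →
      IntervalIntegrable (X (m + 2)) MeasureTheory.volume a b := by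
    intro a b ha hb
    apply ContinuousOn.intervalIntegrable
    intro s hs
    have h1 : (1 : ℝ) ≤ s := le_trans (le_min ha hb) hs.1
    exact (hfc s (le_trans zero_le_one h1)).continuousWithinAt
  set I : ℝ → ℝ := fun t => ∫ s in (1:ℝ)..t, X (m + 2) s with hIdef
  have hI : ∀ t : ℝ, 1 ≤ t → HasDerivAt I (X (m + 2) t) t := by
    intro t ht
    exact intervalIntegral.integral_hasDerivAt_right (hint 1 t le_rfl ht)
      (hfcOn.stronglyMeasurableAtFilter isOpen_Ioi t (lt_of_lt_of_le zero_lt_one ht))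
      (hfc t (le_trans zero_le_one ht))
  set G : ℝ → ℝ := fun t => X (m + 1) t * Real.exp (k * I t) with hGdef
  have hG : ∀ t : ℝ, 1 ≤ t →
      HasDerivAt G ((2 : ℝ) ^ m * (X m t) ^ 2 * Real.exp (k * I t)) t := by
    intro t ht
    have ht0 : (0 : ℝ) ≤ t := le_trans zero_le_one ht
    have h1 := hode m t ht0
    have h2 := (((hI t ht).const_mul k).exp)
    have h3 := h1.mul h2
    refine h3.congr_deriv ?_
    rw [hkdef]
    ring
  have hGmono : MonotoneOn G (Set.Ici (1 : ℝ)) := by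
    apply monotoneOn_of_deriv_nonneg (convex_Ici 1)
    · exact fun t ht => (hG t ht).continuousAt.continuousWithinAt
    · rw [interior_Ici]
      exact fun t ht => ((hG t (le_of_lt ht)).differentiableAt).differentiableWithinAt
    · rw [interior_Ici]
      intro t ht
      rw [(hG t (le_of_lt ht)).deriv]
      have := hpos m t (le_trans zero_le_one (le_of_lt ht))
      positivity
  have main1 : ∀ t : ℝ, 1 ≤ t →
      k⁻¹ * Real.log t + k⁻¹ * Real.log (X (m + 1) 1 / C) ≤ I t := by
    intro t ht
    have ht0 : (0 : ℝ) < t := lt_of_lt_of_le zero_lt_one ht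
    have hGle : G 1 ≤ G t := hGmono Set.self_mem_Ici ht ht
    have hI1 : I 1 = 0 := intervalIntegral.integral_same
    have hG1 : G 1 = X (m + 1) 1 := by simp [hGdef, hI1]
    have hdec : X (m + 1) t ≤ C / t := hdecay (m + 1) t ht
    have hexp : X (m + 1) 1 ≤ C / t * Real.exp (k * I t) := by
      rw [hG1] at hGle
      refine le_trans hGle ?_
      exact mul_le_mul_of_nonneg_right hdec (Real.exp_pos _).le
    have hexp2 : X (m + 1) 1 / C * t ≤ Real.exp (k * I t) := by
      rw [div_mul_eq_mul_div, div_le_iff₀ hC]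
      calc X (m + 1) 1 * t ≤ C / t * Real.exp (k * I t) * t := by
            exact mul_le_mul_of_nonneg_right hexp ht0.le
        _ = Real.exp (k * I t) * C := by field_simp
    have hXC : 0 < X (m + 1) 1 / C := div_pos hn1 hC
    have hlog : Real.log (X (m + 1) 1 / C * t) ≤ k * I t := by
      rw [Real.log_le_iff_le_exp (by positivity)]
      exact hexp2
    rw [Real.log_mul (ne_of_gt hXC) (ne_of_gt ht0)] at hlog
    have h4 : k⁻¹ * (Real.log (X (m + 1) 1 / C) + Real.log t) ≤ k⁻¹ * (k * I t) :=
      mul_le_mul_of_nonneg_left hlog (inv_nonneg.2 hkpos.le)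
    rw [inv_mul_cancel_left₀ hk0] at h4
    linarith
  refine ⟨main1, ?_, ?_⟩
  · -- tendsto atTop
    apply tendsto_atTop_mono' atTop
      (eventually_atTop.2 ⟨1, fun t ht => main1 t ht⟩)
    have := (Real.tendsto_log_atTop.const_mul_atTop (inv_pos.2 hkpos))
    exact tendsto_atTop_add_const_right _ _ this
  · -- limsup
    by_contra hcon
    push_neg at hcon
    set L := Filter.limsup (fun t : ℝ => t * X (m + 1 + 1) t) atTop with hL
    set a : ℝ := (L + k⁻¹) / 2 with ha
    have hak : a < k⁻¹ := by rw [ha]; linarith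
    have hLa : L < a := by rw [ha]; linarith
    have hbdd : IsBoundedUnder (· ≤ ·) atTop (fun t : ℝ => t * X (m + 1 + 1) t) := by
      refine ⟨C, eventually_map.2 ?_⟩
      filter_upwards [eventually_ge_atTop (1 : ℝ)] with t ht
      have ht0 : (0 : ℝ) < t := lt_of_lt_of_le zero_lt_one ht
      have := hdecay (m + 1 + 1) t ht
      calc t * X (m + 1 + 1) t ≤ t * (C / t) := by
            exact mul_le_mul_of_nonneg_left this ht0.le
        _ = C := by field_simp
    have hev := Filter.eventually_lt_of_limsup_lt hLa hbdd
    obtain ⟨T₀, hT₀⟩ := eventually_atTop.1 hev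
    set T : ℝ := max T₀ 1 with hT
    have hT1 : (1 : ℝ) ≤ T := le_max_right _ _
    have hT0 : (0 : ℝ) < T := lt_of_lt_of_le zero_lt_one hT1
    have key : ∀ t : ℝ, T ≤ t → I t ≤ I T + a * Real.log t - a * Real.log T := by
      intro t ht
      have ht1 : (1 : ℝ) ≤ t := le_trans hT1 ht
      have ht0 : (0 : ℝ) < t := lt_of_lt_of_le zero_lt_one ht1
      have hsplit : I T + ∫ s in T..t, X (m + 2) s = I t :=
        intervalIntegral.integral_add_adjacent_intervals (hint 1 T le_rfl hT1)
          (hint T t hT1 ht1)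
      have hintat : IntervalIntegrable (fun s : ℝ => a * s⁻¹) MeasureTheory.volume T t := by
        apply ContinuousOn.intervalIntegrable
        apply ContinuousOn.mul continuousOn_const
        apply ContinuousOn.inv₀ continuousOn_id
        intro s hs
        have : (1 : ℝ) ≤ s := le_trans (le_min hT1 ht1) hs.1
        exact ne_of_gt (lt_of_lt_of_le zero_lt_one this)
      have hmono2 : (∫ s in T..t, X (m + 2) s) ≤ ∫ s in T..t, a * s⁻¹ := by
        apply intervalIntegral.integral_mono_on ht (hint T t hT1 ht1) hintat
        intro s hs
        have hs1 : (1 : ℝ) ≤ s := le_trans hT1 hs.1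
        have hs0 : (0 : ℝ) < s := lt_of_lt_of_le zero_lt_one hs1
        have hsa : s * X (m + 2) s < a := hT₀ s (le_trans (le_max_left _ _) hs.1)
        rw [← div_eq_mul_inv, le_div_iff₀ hs0]
        nlinarith [hsa]
      have hval : (∫ s in T..t, a * s⁻¹) = a * (Real.log t - Real.log T) := by
        have h0ni : (0 : ℝ) ∉ Set.uIcc T t := by
          intro h
          rcases Set.mem_uIcc.1 h with ⟨h1, _⟩ | ⟨h1, _⟩ <;> linarith
        rw [integral_const_mul, integral_inv h0ni,
          Real.log_div (ne_of_gt ht0) (ne_of_gt hT0)]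
      rw [← hsplit]
      rw [hval] at hmono2
      linarith
    have hbound : ∀ᶠ t in atTop, (k⁻¹ - a) * Real.log t ≤
        I T - a * Real.log T - k⁻¹ * Real.log (X (m + 1) 1 / C) := by
      filter_upwards [eventually_ge_atTop T] with t ht
      have ht1 : (1 : ℝ) ≤ t := le_trans hT1 ht
      have h1 := main1 t ht1
      have h2 := key t ht
      nlinarith [h1, h2]
    have htends : Tendsto (fun t : ℝ => (k⁻¹ - a) * Real.log t) atTop atTop :=
      Real.tendsto_log_atTop.const_mul_atTop (by linarith)
    obtain ⟨t, h1, h2⟩ := ((htends.eventually_gt_atTop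
      (I T - a * Real.log T - k⁻¹ * Real.log (X (m + 1) 1 / C))).and hbound).exists
    linarith
end

section
/- Define D_0 = d_0 > 0, D_1 = d_1 ≥ 0, and D_{k+1} = M Σ_{i=0}^k D_i D_{k-i} for k ≥ 1, where M > 0. Then the generating function G(z) = Σ_{k≥0} D_k z^k satisfies G(z) = (1 - √(1 - 4 M d_0 z + 4 A M² d_0² z²))/(2Mz) where A = 1 - d_1/(M d_0²) ... [with A defined so that M d_0² A = M d_0² - d_1], and the radius of convergence of G equals the smaller root z_1 = (1 - √(1 - A))/(2 A M d_0) of the radicand when 0 < A < 1, with both roots real and positive. -/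
open Finset

lemma cauchyAux_partial_sum_le {a : ℕ → ℝ} (ha : ∀ i, 0 ≤ a i) (n : ℕ) :
    ∑ j ∈ range n, ∑ i ∈ range (j + 1), a i * a (j - i)
      ≤ (∑ i ∈ range n, a i) ^ 2 := by
  classical
  have h1 : ∑ j ∈ range n, ∑ i ∈ range (j + 1), a i * a (j - i)
      = ∑ p ∈ (range n).sigma (fun j => range (j + 1)), a p.2 * a (p.1 - p.2) := by
    rw [Finset.sum_sigma]
  have h2 : (∑ i ∈ range n, a i) ^ 2
      = ∑ p ∈ range n ×ˢ range n, a p.1 * a p.2 := by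
    rw [sq, Finset.sum_mul_sum, Finset.sum_product]
  rw [h1, h2]
  have hinj : Set.InjOn (fun p : (_ : ℕ) × ℕ => (p.2, p.1 - p.2))
      ((range n).sigma (fun j => range (j + 1))) := by
    intro p hp q hq h
    simp only [Finset.mem_coe, Finset.mem_sigma, Finset.mem_range, Nat.lt_succ_iff] at hp hq
    simp only [Prod.mk.injEq] at h
    have : p.1 = q.1 := by omega
    exact Sigma.ext this (by simp [h.1])
  calc ∑ p ∈ (range n).sigma (fun j => range (j + 1)), a p.2 * a (p.1 - p.2)
      = ∑ q ∈ ((range n).sigma (fun j => range (j + 1))).image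
          (fun p : (_ : ℕ) × ℕ => (p.2, p.1 - p.2)), a q.1 * a q.2 := by
        rw [Finset.sum_image (fun p hp q hq h => hinj hp hq h)]
    _ ≤ ∑ p ∈ range n ×ˢ range n, a p.1 * a p.2 := by
        apply Finset.sum_le_sum_of_subset_of_nonneg
        · intro q hq
          simp only [Finset.mem_image, Finset.mem_sigma, Finset.mem_range,
            Nat.lt_succ_iff, Finset.mem_product] at hq ⊢
          obtain ⟨p, ⟨h1, h2⟩, rfl⟩ := hq
          constructor <;> omega
        · intro p _ _
          exact mul_nonneg (ha _) (ha _)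

lemma convAux (D : ℕ → ℝ) (w : ℝ) (j : ℕ) :
    (∑ i ∈ range (j + 1), D i * D (j - i)) * w ^ j
      = ∑ i ∈ range (j + 1), (D i * w ^ i) * (D (j - i) * w ^ (j - i)) := by
  rw [Finset.sum_mul]
  refine Finset.sum_congr rfl fun i hi => ?_
  have hij : i ≤ j := Nat.lt_succ_iff.mp (Finset.mem_range.mp hi)
  have hw : w ^ i * w ^ (j - i) = w ^ j := by
    rw [← pow_add, Nat.add_sub_cancel' hij]
  rw [← hw]; ring

lemma quadAux (d₀ d₁ M : ℝ) (D : ℕ → ℝ)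
    (hD0 : D 0 = d₀) (hD1 : D 1 = d₁)
    (hrec : ∀ k : ℕ, 1 ≤ k →
      D (k + 1) = M * ∑ i ∈ Finset.range (k + 1), D i * D (k - i))
    (z : ℝ) (hns : Summable fun k : ℕ => ‖D k * z ^ k‖) :
    M * z * (∑' k : ℕ, D k * z ^ k) ^ 2
      = M * d₀ ^ 2 * z + (∑' k : ℕ, D k * z ^ k) - d₀ - d₁ * z := by
  set f : ℕ → ℝ := fun k => D k * z ^ k with hf
  have hs : Summable f := hns.of_norm
  set T : ℝ := ∑' k, f k with hT
  -- Cauchy product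
  have hcp : T ^ 2 = ∑' n : ℕ, ∑ i ∈ Finset.range (n + 1), f i * f (n - i) := by
    rw [sq, hT, tsum_mul_tsum_eq_tsum_sum_range_of_summable_norm hns hns]
  have hgs : Summable (fun n : ℕ => ∑ i ∈ Finset.range (n + 1), f i * f (n - i)) :=
    (summable_norm_sum_mul_range_of_summable_norm hns hns).of_norm
  have hginner : ∀ n : ℕ, ∑ i ∈ Finset.range (n + 1), f i * f (n - i)
      = (∑ i ∈ Finset.range (n + 1), D i * D (n - i)) * z ^ n :=
    fun n => (convAux D z n).symm
  set g : ℕ → ℝ := fun n => (∑ i ∈ Finset.range (n + 1), D i * D (n - i)) * z ^ n with hg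
  have hgs' : Summable g := by
    refine hgs.congr fun n => hginner n
  have hcp' : T ^ 2 = ∑' n, g n := by
    rw [hcp]; exact tsum_congr hginner
  -- multiply by M * z
  set h : ℕ → ℝ := fun n => M * (∑ i ∈ Finset.range (n + 1), D i * D (n - i)) * z ^ (n + 1)
    with hh
  have hhs : Summable h := by
    refine ((hgs'.mul_left (M * z)).congr fun n => ?_)
    simp only [hh, hg, pow_succ]; ring
  have hMzT2 : M * z * T ^ 2 = ∑' n, h n := by
    rw [hcp', ← tsum_mul_left]
    refine tsum_congr fun n => ?_
    simp only [hh, hg, pow_succ]; ring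
  -- peel off the first term of h
  have hh0 : h 0 = M * d₀ ^ 2 * z := by
    simp only [hh, Finset.sum_range_one, Nat.sub_zero, hD0, pow_one, zero_add]
    ring
  have hhsucc : ∀ n : ℕ, h (n + 1) = f (n + 2) := by
    intro n
    simp only [hh, hf]
    rw [hrec (n + 1) (by omega)]
  have hsplit : ∑' n, h n = M * d₀ ^ 2 * z + ∑' n, f (n + 2) := by
    rw [Summable.tsum_eq_zero_add hhs, hh0]
    congr 1
    exact tsum_congr hhsucc
  -- peel off two first terms of f
  have hs1 : Summable (fun n => f (n + 1)) := (summable_nat_add_iff 1).2 hs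
  have hTsplit : T = d₀ + d₁ * z + ∑' n, f (n + 2) := by
    rw [hT, Summable.tsum_eq_zero_add hs, Summable.tsum_eq_zero_add hs1]
    have h0 : f 0 = d₀ := by simp [hf, hD0]
    have h1 : f 1 = d₁ * z := by simp [hf, hD1]
    have h2 : ∑' (b : ℕ), f (b + 1 + 1) = ∑' n, f (n + 2) :=
      tsum_congr fun n => by norm_num
    rw [h0, h1, h2, add_assoc]
  rw [hMzT2, hsplit]
  linarith [hTsplit]

set_option maxHeartbeats 1000000 in
/-- Catalan-like recursion with modified first step: explicit formula for the
generating function `G(z) = ∑ D_k z^k`, and identification of its radius of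
convergence as the smaller positive root `z₁` of the radicand
`1 - 4 M d₀ z + 4 A M² d₀² z²`, where `A = 1 - d₁/(M d₀²)`. -/
theorem catalan_like_generating_function (d₀ d₁ M : ℝ)
    (hd₀ : 0 < d₀) (hd₁ : 0 ≤ d₁) (hM : 0 < M)
    (A : ℝ) (hA : A = 1 - d₁ / (M * d₀ ^ 2)) (hA0 : 0 < A) (hA1 : A < 1)
    (D : ℕ → ℝ) (hD0 : D 0 = d₀) (hD1 : D 1 = d₁)
    (hrec : ∀ k : ℕ, 1 ≤ k →
      D (k + 1) = M * ∑ i ∈ Finset.range (k + 1), D i * D (k - i)) :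
    (0 < (1 - Real.sqrt (1 - A)) / (2 * A * M * d₀)) ∧
    ((1 - Real.sqrt (1 - A)) / (2 * A * M * d₀)
      ≤ (1 + Real.sqrt (1 - A)) / (2 * A * M * d₀)) ∧
    (1 - 4 * M * d₀ * ((1 - Real.sqrt (1 - A)) / (2 * A * M * d₀))
      + 4 * A * M ^ 2 * d₀ ^ 2
          * ((1 - Real.sqrt (1 - A)) / (2 * A * M * d₀)) ^ 2 = 0) ∧
    (∀ z : ℝ, |z| < (1 - Real.sqrt (1 - A)) / (2 * A * M * d₀) →
      Summable (fun k : ℕ => D k * z ^ k) ∧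
      (z ≠ 0 → (∑' k : ℕ, D k * z ^ k)
        = (1 - Real.sqrt (1 - 4 * M * d₀ * z + 4 * A * M ^ 2 * d₀ ^ 2 * z ^ 2))
            / (2 * M * z))) ∧
    (∀ z : ℝ, (1 - Real.sqrt (1 - A)) / (2 * A * M * d₀) < z →
      ¬ Summable (fun k : ℕ => D k * z ^ k)) := by
  have hMd : (0:ℝ) < M * d₀ ^ 2 := by positivity
  have hd1pos : 0 < d₁ := by
    have h1 : A < 1 := hA1
    rw [hA] at h1
    have h2 : 0 < d₁ / (M * d₀ ^ 2) := by linarith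
    have h3 := mul_pos h2 hMd
    rwa [div_mul_cancel₀ _ (ne_of_gt hMd)] at h3
  have hd1' : d₁ = (1 - A) * (M * d₀ ^ 2) := by
    rw [hA]; field_simp; ring
  set s := Real.sqrt (1 - A) with hsdef
  have hA1' : (0:ℝ) < 1 - A := by linarith
  have hs0 : 0 < s := Real.sqrt_pos.2 hA1'
  have hss : s ^ 2 = 1 - A := Real.sq_sqrt hA1'.le
  have hs1 : s < 1 := by nlinarith [hss, hs0]
  set z₁ := (1 - s) / (2 * A * M * d₀) with hz₁def
  set z₂ := (1 + s) / (2 * A * M * d₀) with hz₂def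
  have hden : (0:ℝ) < 2 * A * M * d₀ := by positivity
  have hc4 : (0:ℝ) < 4*A*M^2*d₀^2 := by positivity
  have hz₁pos : 0 < z₁ := div_pos (by linarith) hden
  have hz₁₂ : z₁ < z₂ := by
    rw [hz₁def, hz₂def, div_lt_div_iff₀ hden hden]
    linarith [mul_pos hs0 hden]
  -- factorization of the radicand
  have hfac : ∀ w : ℝ, 1 - 4*M*d₀*w + 4*A*M^2*d₀^2*w^2
      = (4*A*M^2*d₀^2) * ((w - z₁) * (w - z₂)) := by
    intro w
    rw [hz₁def, hz₂def]
    have hA' : A = 1 - s^2 := by linarith [hss]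
    rw [hA']
    have h1 : (0:ℝ) < 1 - s^2 := by rw [← hA']; exact hA0
    field_simp
    ring
  -- positivity of coefficients of D
  have hDpos : ∀ k, 0 < D k := by
    intro k
    induction k using Nat.strong_induction_on with
    | _ k ih =>
      match k, ih with
      | 0, _ => rw [hD0]; exact hd₀
      | 1, _ => rw [hD1]; exact hd1pos
      | (m+2), ih =>
        rw [hrec (m+1) (by omega)]
        refine mul_pos hM (Finset.sum_pos (fun i hi => ?_) ⟨0, by simp⟩)
        have hi' : i < m + 2 := Finset.mem_range.mp hi
        exact mul_pos (ih i (by omega)) (ih (m+1-i) (by omega))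
  -- the partial sum bound
  have hbound : ∀ w : ℝ, 0 < w → w ≤ z₁ → ∀ n : ℕ,
      ∑ k ∈ Finset.range n, D k * w ^ k
        ≤ (1 - Real.sqrt (1 - 4*M*d₀*w + 4*A*M^2*d₀^2*w^2)) / (2*M*w) := by
    intro w hw hwle
    have hr0 : 0 ≤ 1 - 4*M*d₀*w + 4*A*M^2*d₀^2*w^2 := by
      rw [hfac w]
      have h1 : w - z₁ ≤ 0 := by linarith
      have h2 : w - z₂ ≤ 0 := by linarith
      linarith [mul_nonneg hc4.le (mul_nonneg (neg_nonneg.2 h1) (neg_nonneg.2 h2))]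
    set r := 1 - 4*M*d₀*w + 4*A*M^2*d₀^2*w^2 with hrdef
    set q := Real.sqrt r with hqdef
    have hq0 : 0 ≤ q := Real.sqrt_nonneg r
    have hq2 : q ^ 2 = r := Real.sq_sqrt hr0
    set c := d₀ - A*M*d₀^2*w with hcdef
    set L := (1 - q) / (2*M*w) with hLdef
    have hMw : (0:ℝ) < 2*M*w := by positivity
    clear_value r q c L
    have h2Md : 2*M*d₀*w < 1 := by
      have h1 : 2*M*d₀*z₁ = (1-s)/A := by
        rw [hz₁def]; field_simp
      have h2 : (1-s)/A < 1 := by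
        rw [div_lt_one hA0]
        linarith [hss, mul_pos hs0 (sub_pos.2 hs1)]
      have h3 : 2*M*d₀*w ≤ 2*M*d₀*z₁ :=
        mul_le_mul_of_nonneg_left hwle (by positivity)
      linarith
    have hqlt : q < 1 - 2*M*d₀*w := by
      rw [hqdef]
      refine (Real.sqrt_lt' (by linarith)).2 ?_
      rw [hrdef]
      have h8 : 0 < (1-A)*(4*M^2*d₀^2*w^2) :=
        mul_pos hA1' (by positivity)
      linarith [h8]
    have hd₀L : d₀ ≤ L := by
      rw [hLdef, le_div_iff₀ hMw]; linarith [hqlt]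
    have hL1 : 2*M*w*L = 1 - q := by
      rw [hLdef]; field_simp
    have h4 : (2*M*w*L - 1)^2 = 1 - 4*M*w*c := by
      rw [hL1, hcdef]
      have : ((1 - q) - 1)^2 = q^2 := by ring
      rw [this, hq2, hrdef]; ring
    have hfix : c + M*w*L^2 = L := by
      have h5 : (4*M*w) * (c + M*w*L^2 - L) = 0 := by linear_combination h4
      have h6 : c + M*w*L^2 - L = 0 :=
        (mul_eq_zero.mp h5).resolve_left (by positivity)
      linarith
    intro n
    induction n with
    | zero => simp; linarith
    | succ n ih =>
      rcases n with _ | m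
      · simpa [hD0] using hd₀L
      · set conv : ℕ → ℝ := fun j => (∑ i ∈ Finset.range (j+1), D i * D (j-i)) * w^j
          with hconvdef
        have hstep : ∑ k ∈ Finset.range (m+2), D k * w^k
            = d₀ + d₁*w + M*w*((∑ j ∈ Finset.range (m+1), conv j) - d₀^2) := by
          have e4 : ∀ x ∈ Finset.range m, D (x+1+1) * w^(x+1+1) = M*w*(conv (x+1)) := by
            intro x _
            simp only [hconvdef]
            rw [hrec (x+1) (by omega)]
            ring
          have e5 : conv 0 = d₀^2 := by
            simp [hconvdef, hD0]; ring
          rw [Finset.sum_range_succ' (fun k => D k * w^k) (m+1),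
              Finset.sum_range_succ' (fun k => D (k+1) * w^(k+1)) m,
              Finset.sum_congr rfl e4, ← Finset.mul_sum]
          have e6 : ∑ x ∈ Finset.range m, conv (x+1)
              = (∑ j ∈ Finset.range (m+1), conv j) - d₀^2 := by
            rw [Finset.sum_range_succ' conv m, e5]; ring
          rw [e6, hD0, hD1]
          ring
        have hG : (∑ j ∈ Finset.range (m+1), conv j)
            ≤ (∑ k ∈ Finset.range (m+1), D k * w^k)^2 := by
          have h7 := cauchyAux_partial_sum_le
            (a := fun k => D k * w^k)
            (fun i => mul_nonneg (hDpos i).le (by positivity)) (m+1)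
          refine le_trans (le_of_eq ?_) h7
          exact Finset.sum_congr rfl fun j _ => convAux D w j
        have hP0 : 0 ≤ ∑ k ∈ Finset.range (m+1), D k * w^k :=
          Finset.sum_nonneg fun k _ => mul_nonneg (hDpos k).le (by positivity)
        calc ∑ k ∈ Finset.range (m+2), D k * w^k
            = d₀ + d₁*w + M*w*((∑ j ∈ Finset.range (m+1), conv j) - d₀^2) := hstep
          _ ≤ d₀ + d₁*w + M*w*((∑ k ∈ Finset.range (m+1), D k * w^k)^2 - d₀^2) := by
              have h9 : M*w*((∑ j ∈ Finset.range (m+1), conv j) - d₀^2)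
                  ≤ M*w*((∑ k ∈ Finset.range (m+1), D k * w^k)^2 - d₀^2) :=
                mul_le_mul_of_nonneg_left (by linarith [hG]) (by positivity)
              linarith [h9]
          _ ≤ d₀ + d₁*w + M*w*(L^2 - d₀^2) := by
              have hL2 : (∑ k ∈ Finset.range (m+1), D k * w^k)^2 ≤ L^2 :=
                pow_le_pow_left₀ hP0 ih 2
              have h9 : M*w*((∑ k ∈ Finset.range (m+1), D k * w^k)^2 - d₀^2)
                  ≤ M*w*(L^2 - d₀^2) :=
                mul_le_mul_of_nonneg_left (by linarith [hL2]) (by positivity)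
              linarith [h9]
          _ = c + M*w*L^2 := by rw [hcdef, hd1']; ring
          _ = L := hfix
  -- summability at z₁
  have hnn : ∀ z : ℝ, 0 ≤ z → ∀ k : ℕ, 0 ≤ D k * z ^ k :=
    fun z hz k => mul_nonneg (hDpos k).le (by positivity)
  have hz₁sum : Summable (fun k => D k * z₁^k) :=
    summable_of_sum_range_le (hnn z₁ hz₁pos.le) (hbound z₁ hz₁pos le_rfl)
  refine ⟨hz₁pos, ?_, ?_, ?_, ?_⟩
  · rw [hz₁def, hz₂def]
    gcongr
  · rw [hfac z₁]
    simp
  · intro z hz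
    have habs : ∀ k : ℕ, ‖D k * z^k‖ = D k * |z|^k := by
      intro k
      rw [Real.norm_eq_abs, abs_mul, abs_pow, abs_of_pos (hDpos k)]
    have hnormsum : Summable (fun k => ‖D k * z^k‖) := by
      refine Summable.of_nonneg_of_le (fun k => norm_nonneg _) (fun k => ?_) hz₁sum
      rw [habs k]
      exact mul_le_mul_of_nonneg_left (pow_le_pow_left₀ (abs_nonneg z) hz.le k) (hDpos k).le
    refine ⟨hnormsum.of_norm, ?_⟩
    intro hz0
    have hq := quadAux d₀ d₁ M D hD0 hD1 hrec z hnormsum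
    have hsq : (1 - 2*M*z*(∑' k : ℕ, D k * z ^ k))^2
        = 1 - 4*M*d₀*z + 4*A*M^2*d₀^2*z^2 := by
      linear_combination 4*M*z*hq - 4*M*z^2*hd1'
    have hzabs : 0 < |z| := abs_pos.2 hz0
    have habs_sum : Summable (fun k => D k * |z|^k) := hnormsum.congr habs
    have hT' : ∑' k : ℕ, D k * |z|^k
        ≤ (1 - Real.sqrt (1 - 4*M*d₀*|z| + 4*A*M^2*d₀^2*|z|^2))/(2*M*|z|) :=
      Summable.tsum_le_of_sum_range_le habs_sum (hbound |z| hzabs hz.le)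
    have hradabs : 0 < 1 - 4*M*d₀*|z| + 4*A*M^2*d₀^2*|z|^2 := by
      rw [hfac |z|]
      have h1 : |z| - z₁ < 0 := by linarith
      have h2 : |z| - z₂ < 0 := by linarith
      linarith [mul_pos hc4 (mul_pos (neg_pos.2 h1) (neg_pos.2 h2))]
    have hsqrtpos : 0 < Real.sqrt (1 - 4*M*d₀*|z| + 4*A*M^2*d₀^2*|z|^2) :=
      Real.sqrt_pos.2 hradabs
    have hTle : |(∑' k : ℕ, D k * z ^ k)| ≤ ∑' k : ℕ, D k * |z|^k := by
      calc |(∑' k : ℕ, D k * z ^ k)| = ‖∑' k : ℕ, D k * z ^ k‖ := (Real.norm_eq_abs _).symm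
        _ ≤ ∑' k : ℕ, ‖D k * z^k‖ := norm_tsum_le_tsum_norm hnormsum
        _ = ∑' k : ℕ, D k * |z|^k := tsum_congr habs
    have hkey : 2*M*|z| * (∑' k : ℕ, D k * |z|^k)
        ≤ 1 - Real.sqrt (1 - 4*M*d₀*|z| + 4*A*M^2*d₀^2*|z|^2) := by
      rw [le_div_iff₀ (by positivity)] at hT'
      linarith
    have hlt1 : |2*M*z*(∑' k : ℕ, D k * z ^ k)| < 1 := by
      have he : |2*M*z*(∑' k : ℕ, D k * z ^ k)|
          = 2*M*|z| * |(∑' k : ℕ, D k * z ^ k)| := by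
        rw [abs_mul, abs_mul, abs_mul, abs_of_nonneg (by norm_num : (0:ℝ) ≤ 2),
          abs_of_pos hM]
      rw [he]
      have h5 : 2*M*|z| * |(∑' k : ℕ, D k * z ^ k)| ≤ 2*M*|z| * (∑' k : ℕ, D k * |z|^k) :=
        mul_le_mul_of_nonneg_left hTle (by positivity)
      linarith
    have hpos : 0 < 1 - 2*M*z*(∑' k : ℕ, D k * z ^ k) := by
      have h6 := (abs_lt.mp hlt1).2
      linarith
    have hsqrt_eq : Real.sqrt (1 - 4*M*d₀*z + 4*A*M^2*d₀^2*z^2)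
        = 1 - 2*M*z*(∑' k : ℕ, D k * z ^ k) := by
      rw [← hsq, Real.sqrt_sq hpos.le]
    have h2Mz : (2:ℝ)*M*z ≠ 0 := by
      refine mul_ne_zero (mul_ne_zero ?_ hM.ne') hz0
      norm_num
    rw [show (1:ℝ) - 4 * M * d₀ * z + 4 * A * M ^ 2 * d₀ ^ 2 * z ^ 2
        = 1 - 4*M*d₀*z + 4*A*M^2*d₀^2*z^2 from by ring, hsqrt_eq, eq_div_iff h2Mz]
    ring
  · intro z hz hcon
    have hzpos : 0 < z := lt_trans hz₁pos hz
    set w := min z ((z₁+z₂)/2) with hwdef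
    have hw1 : z₁ < w := lt_min hz (by linarith)
    have hw2 : w < z₂ := lt_of_le_of_lt (min_le_right _ _) (by linarith)
    have hwz : w ≤ z := min_le_left _ _
    have hwpos : 0 < w := lt_trans hz₁pos hw1
    have hsw : Summable (fun k => D k * w^k) := by
      refine Summable.of_nonneg_of_le (hnn w hwpos.le) (fun k => ?_) hcon
      exact mul_le_mul_of_nonneg_left (pow_le_pow_left₀ hwpos.le hwz k) (hDpos k).le
    have hnw : Summable (fun k => ‖D k * w^k‖) :=
      hsw.congr fun k => (Real.norm_of_nonneg (hnn w hwpos.le k)).symm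
    have hq := quadAux d₀ d₁ M D hD0 hD1 hrec w hnw
    have hsq : (1 - 2*M*w*(∑' k : ℕ, D k * w ^ k))^2
        = 1 - 4*M*d₀*w + 4*A*M^2*d₀^2*w^2 := by
      linear_combination 4*M*w*hq - 4*M*w^2*hd1'
    have hneg : 1 - 4*M*d₀*w + 4*A*M^2*d₀^2*w^2 < 0 := by
      rw [hfac w]
      have h1 : 0 < w - z₁ := by linarith
      have h2 : w - z₂ < 0 := by linarith
      linarith [mul_pos hc4 (mul_pos h1 (neg_pos.2 h2))]
    linarith [sq_nonneg (1 - 2*M*w*(∑' k : ℕ, D k * w ^ k)), hsq, hneg]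
end
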